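/- Let p > 2 be a prime, let f(X) = αX² + βX + γ be a quadratic polynomial over F_p with α ≠ 0, and let S = {(x,y) ∈ F_p² : y < f(x)}. Then for every nonzero d ∈ F_p, the image of the projection function pr_{S,d} is an interval of integers: every integer k with (min_{b} pr_{S,d}(b)) ≤ k ≤ (max_{b} pr_{S,d}(b)) is attained as pr_{S,d}(b) for some b ∈ F_p. -/

import Mathlib

/-- The projection function of the set `S = {(x,y) : y < f(x)}` from direction `d`:
`pr p f d b` is the number of points of `S` on the line `Y = d X + b`. -/
def parabolaProj (p : ℕ) [NeZero p] (f : ZMod p → ZMod p) (d b : ZMod p) : ℕ :=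
  (Finset.univ.filter fun x : ZMod p => (d * x + b).val < (f x).val).card

lemma parabolaProj_step (p : ℕ) [Fact p.Prime] (f : ZMod p → ZMod p) (d : ZMod p) (hd : d ≠ 0)
    (b : ZMod p) : parabolaProj p f d (b + 1) ≤ parabolaProj p f d b + 1 := by
  classical
  unfold parabolaProj
  have hsub : (Finset.univ.filter fun x : ZMod p => (d * x + (b + 1)).val < (f x).val) ⊆
      (Finset.univ.filter fun x : ZMod p => (d * x + b).val < (f x).val) ∪
      (Finset.univ.filter fun x : ZMod p => d * x + b + 1 = 0) := by
    intro x hx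
    simp only [Finset.mem_filter, Finset.mem_univ, true_and] at hx
    simp only [Finset.mem_union, Finset.mem_filter, Finset.mem_univ, true_and]
    by_cases h0 : d * x + b + 1 = 0
    · exact Or.inr h0
    · left
      set u : ZMod p := d * x + b with hu
      have hne : u ≠ -1 := by
        intro h
        apply h0
        rw [h]; ring
      have hval : u.val + 1 < p := by
        have h1 := ZMod.val_lt u
        rcases lt_or_eq_of_le (Nat.succ_le_of_lt h1) with h | h
        · exact h
        · exfalso
          apply hne
          have huv : u.val = p - 1 := by omega
          have hcast : (u.val : ZMod p) = u := by rw [ZMod.natCast_val, ZMod.cast_id]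
          have hp1 : (1 : ℕ) ≤ p := Nat.one_le_of_lt h1
          rw [← hcast, huv]
          push_cast [Nat.cast_sub hp1]
          simp
      have hval1 : (u + 1).val = u.val + 1 := by
        have : ((1 : ZMod p)).val = 1 % p := ZMod.val_one_eq_one_mod p
        rw [ZMod.val_add, this]
        have hp1 : 1 < p := by
          have := ZMod.val_lt u; omega
        rw [Nat.mod_eq_of_lt hp1, Nat.mod_eq_of_lt hval]
      have : (d * x + (b + 1)).val = u.val + 1 := by
        rw [← hval1, hu]; ring_nf
      omega
  calc (Finset.univ.filter fun x : ZMod p => (d * x + (b + 1)).val < (f x).val).card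
      ≤ ((Finset.univ.filter fun x : ZMod p => (d * x + b).val < (f x).val) ∪
        (Finset.univ.filter fun x : ZMod p => d * x + b + 1 = 0)).card :=
        Finset.card_le_card hsub
    _ ≤ (Finset.univ.filter fun x : ZMod p => (d * x + b).val < (f x).val).card +
        (Finset.univ.filter fun x : ZMod p => d * x + b + 1 = 0).card :=
        Finset.card_union_le _ _
    _ ≤ _ := by
        gcongr
        apply Finset.card_le_one.mpr
        intro x hx y hy
        simp only [Finset.mem_filter, Finset.mem_univ, true_and] at hx hy
        have : d * x = d * y := by
          have := hx.trans hy.symm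
          linear_combination this
        exact mul_left_cancel₀ hd this

lemma walk_lemma (g : ℕ → ℕ) (hstep : ∀ n, g (n + 1) ≤ g n + 1) (k : ℕ) (h0 : g 0 ≤ k) :
    ∀ n, k ≤ g n → ∃ i, g i = k := by
  intro n
  induction n with
  | zero => exact fun hn => ⟨0, le_antisymm h0 hn⟩
  | succ n ih =>
    intro hn
    by_cases h : k ≤ g n
    · exact ih h
    · push_neg at h
      have := hstep n
      exact ⟨n + 1, le_antisymm (by omega) hn⟩

/-- For every nonzero direction `d`, the image of the projection function of the set of
points below the parabola `Y = αX² + βX + γ` is an interval of integers: every `k`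
between the minimum and the maximum value is attained. -/
theorem proj_below_parabola_image_interval (p : ℕ) [Fact p.Prime] (hp : 2 < p)
    (α β γ : ZMod p) (hα : α ≠ 0) (d : ZMod p) (hd : d ≠ 0) (k : ℕ)
    (hmin : (Finset.univ.image (parabolaProj p (fun x => α * x ^ 2 + β * x + γ) d)).min'
      (Finset.image_nonempty.mpr Finset.univ_nonempty) ≤ k)
    (hmax : k ≤ (Finset.univ.image (parabolaProj p (fun x => α * x ^ 2 + β * x + γ) d)).max'
      (Finset.image_nonempty.mpr Finset.univ_nonempty)) :
    ∃ b : ZMod p, parabolaProj p (fun x => α * x ^ 2 + β * x + γ) d b = k := by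
  classical
  set P : ZMod p → ℕ := parabolaProj p (fun x => α * x ^ 2 + β * x + γ) d with hP
  obtain ⟨bmin, -, hbmin⟩ := Finset.mem_image.mp (Finset.min'_mem _
    (Finset.image_nonempty.mpr Finset.univ_nonempty : (Finset.univ.image P).Nonempty))
  obtain ⟨bmax, -, hbmax⟩ := Finset.mem_image.mp (Finset.max'_mem _
    (Finset.image_nonempty.mpr Finset.univ_nonempty : (Finset.univ.image P).Nonempty))
  set g : ℕ → ℕ := fun n => P (bmin + (n : ZMod p)) with hg
  have hstep : ∀ n, g (n + 1) ≤ g n + 1 := by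
    intro n
    have : bmin + ((n + 1 : ℕ) : ZMod p) = (bmin + (n : ZMod p)) + 1 := by
      push_cast; ring
    simp only [hg, this]
    exact parabolaProj_step p _ d hd _
  have h0 : g 0 ≤ k := by
    simpa [hg, hbmin] using hmin
  have hn : k ≤ g ((bmax - bmin).val) := by
    have : bmin + (((bmax - bmin).val : ℕ) : ZMod p) = bmax := by
      rw [ZMod.natCast_val, ZMod.cast_id]; ring
    simp only [hg, this, hbmax]
    exact hmax
  obtain ⟨i, hi⟩ := walk_lemma g hstep k h0 _ hn
  exact ⟨bmin + (i : ZMod p), hi⟩
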